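/- Zolotarev's identity: For every real-valued random variable X with E[|X|] < ∞, one has E[|X|] = (2/π) ∫₀^∞ (1 − Re E[e^{itX}])/t² dt. -/

import Mathlib

open MeasureTheory

open Real Set Filter Topology
lemma lap_cos_integrable {s : ℝ} (hs : 0 < s) :
    IntegrableOn (fun t => Real.exp (-(s*t)) * Real.cos t) (Ioi (0:ℝ)) := by
  refine ((exp_neg_integrableOn_Ioi 0 hs).congr_fun (fun t _ => by rw [neg_mul]) measurableSet_Ioi).mono' ?_ ?_
  · exact (Continuous.mul (by continuity) Real.continuous_cos).aestronglyMeasurable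
  · filter_upwards with t
    rw [norm_mul, Real.norm_eq_abs, Real.norm_eq_abs, abs_of_pos (Real.exp_pos _)]
    nlinarith [Real.abs_cos_le_one t, Real.exp_pos (-(s*t)), abs_nonneg (Real.cos t)]

lemma lap_cos {s : ℝ} (hs : 0 < s) :
    ∫ t in Ioi (0:ℝ), Real.exp (-(s*t)) * Real.cos t = s / (s^2+1) := by
  have hderiv : ∀ t ∈ Ici (0:ℝ), HasDerivAt
      (fun t => (Real.exp (-(s*t)) * (Real.sin t - s * Real.cos t)) / (s^2+1))
      (Real.exp (-(s*t)) * Real.cos t) t := by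
    intro t _
    have h1 : HasDerivAt (fun t : ℝ => Real.exp (-(s*t))) (Real.exp (-(s*t)) * (-s)) t := by
      simpa using (((hasDerivAt_id t).const_mul s).neg).exp
    have h2 : HasDerivAt (fun t : ℝ => Real.sin t - s * Real.cos t)
        (Real.cos t - s * (-Real.sin t)) t :=
      (Real.hasDerivAt_sin t).sub ((Real.hasDerivAt_cos t).const_mul s)
    have := (h1.mul h2).div_const (s^2+1)
    refine HasDerivAt.congr_deriv this ?_
    field_simp
    ring
  have htends : Tendsto (fun t => (Real.exp (-(s*t)) * (Real.sin t - s * Real.cos t)) / (s^2+1))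
      atTop (𝓝 0) := by
    have hb : Tendsto (fun t : ℝ => Real.exp (-(s*t)) * ((1 + s) / (s^2+1))) atTop (𝓝 0) := by
      have h0 : Tendsto (fun t : ℝ => s * t) atTop atTop :=
        Tendsto.const_mul_atTop hs tendsto_id
      simpa using ((Real.tendsto_exp_neg_atTop_nhds_zero.comp h0).mul_const ((1 + s) / (s^2+1)))
    refine squeeze_zero_norm (fun t => ?_) hb
    rw [norm_div, norm_mul, Real.norm_eq_abs, Real.norm_eq_abs, Real.norm_eq_abs,
        abs_of_pos (Real.exp_pos _), abs_of_pos (by positivity : (0:ℝ) < s^2+1), div_le_iff₀ (by positivity)]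
    have h3 : |Real.sin t - s * Real.cos t| ≤ 1 + s := by
      calc |Real.sin t - s * Real.cos t| ≤ |Real.sin t| + |s * Real.cos t| := abs_sub _ _
        _ ≤ 1 + s := by
          rw [abs_mul, abs_of_pos hs]
          have := Real.abs_sin_le_one t
          have := Real.abs_cos_le_one t
          nlinarith
    have h4 : rexp (-(s*t)) * ((1 + s) / (s^2+1)) * (s^2+1) = rexp (-(s*t)) * (1+s) := by
      field_simp
    rw [h4]
    nlinarith [Real.exp_pos (-(s*t)), abs_nonneg (Real.sin t - s * Real.cos t)]
  have := integral_Ioi_of_hasDerivAt_of_tendsto' hderiv (lap_cos_integrable hs) htends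
  rw [this]
  simp
  field_simp
section
variable {t : ℝ} (ht : 0 < t)

private noncomputable def G (t s : ℝ) : ℝ := -((s/t + 1/t^2) * Real.exp (-(t*s)))

include ht

lemma G_deriv : ∀ s ∈ Ici (0:ℝ), HasDerivAt (G t) (s * Real.exp (-(t*s))) s := by
  intro s _
  have h1 : HasDerivAt (fun s : ℝ => Real.exp (-(t*s))) (Real.exp (-(t*s)) * (-t)) s := by
    simpa using (((hasDerivAt_id s).const_mul t).neg).exp
  have h2 : HasDerivAt (fun s : ℝ => s/t + 1/t^2) (1/t) s := by
    have := ((hasDerivAt_id s).div_const t).add_const (1/t^2)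
    simpa using this
  have := (h2.mul h1).neg
  refine HasDerivAt.congr_deriv this ?_
  field_simp
  ring

lemma G_tendsto : Tendsto (G t) atTop (𝓝 0) := by
  have h0 : Tendsto (fun s : ℝ => t * s) atTop atTop := Tendsto.const_mul_atTop ht tendsto_id
  have h1 : Tendsto (fun u : ℝ => -((u/t^2 + 1/t^2) * Real.exp (-u))) atTop (𝓝 0) := by
    have ha := Real.tendsto_pow_mul_exp_neg_atTop_nhds_zero 1
    have hb := Real.tendsto_exp_neg_atTop_nhds_zero
    have : Tendsto (fun u : ℝ => -(u * Real.exp (-u) / t^2 + (1/t^2) * Real.exp (-u)))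
        atTop (𝓝 (-(0/t^2 + (1/t^2) * 0))) := by
      exact (((ha.congr (by intro x; simp)).div_const (t^2)).add (hb.const_mul (1/t^2))).neg
    simp only [zero_div, mul_zero, add_zero, neg_zero] at this
    refine this.congr fun u => ?_
    field_simp
  have := h1.comp h0
  refine this.congr fun s => ?_
  simp only [Function.comp, G]
  field_simp

lemma exp_lin_integrableOn : IntegrableOn (fun s => s * Real.exp (-(t*s))) (Ioi (0:ℝ)) := by
  refine integrableOn_Ioi_deriv_of_nonneg ?_ (fun s hs => G_deriv ht s (Ioi_subset_Ici_self hs)) ?_ (G_tendsto ht)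
  · exact (Continuous.neg ((by continuity : Continuous fun s : ℝ => s/t + 1/t^2).mul (by continuity))).continuousWithinAt
  · intro s hs
    have : (0:ℝ) < s := hs
    positivity

lemma exp_lin_integral : ∫ s in Ioi (0:ℝ), s * Real.exp (-(t*s)) = 1/t^2 := by
  rw [integral_Ioi_of_hasDerivAt_of_tendsto' (G_deriv ht) (exp_lin_integrableOn ht) (G_tendsto ht)]
  simp [G]

end

lemma one_sub_cos_div_sq_nonneg (a t : ℝ) : 0 ≤ (1 - Real.cos (a*t))/t^2 :=
  div_nonneg (by nlinarith [Real.cos_le_one (a*t)]) (sq_nonneg t)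

lemma exp_rate_integral {s : ℝ} (hs : 0 < s) : ∫ t in Ioi (0:ℝ), Real.exp (-(s*t)) = 1/s := by
  have := integral_comp_mul_left_Ioi (fun u => Real.exp (-u)) 0 hs
  simp only [mul_zero, integral_exp_neg_Ioi_zero, smul_eq_mul, mul_one] at this
  rw [this, one_div]

lemma exp_rate_integrable {s : ℝ} (hs : 0 < s) :
    IntegrableOn (fun t => Real.exp (-(s*t))) (Ioi (0:ℝ)) :=
  (exp_neg_integrableOn_Ioi 0 hs).congr_fun (fun t _ => by simp only [neg_mul]) measurableSet_Ioi

lemma inner_t_integrable {s : ℝ} (hs : 0 < s) :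
    IntegrableOn (fun t => (1 - Real.cos t) * (s * Real.exp (-(s*t)))) (Ioi (0:ℝ)) := by
  have h : IntegrableOn (fun t => s * Real.exp (-(s*t)) - s * (Real.exp (-(s*t)) * Real.cos t)) (Ioi (0:ℝ)) :=
    ((exp_rate_integrable hs).const_mul s).sub ((lap_cos_integrable hs).const_mul s)
  exact IntegrableOn.congr_fun h (fun t _ => by ring) measurableSet_Ioi

lemma inner_t_integral {s : ℝ} (hs : 0 < s) :
    ∫ t in Ioi (0:ℝ), (1 - Real.cos t) * (s * Real.exp (-(s*t))) = 1/(s^2+1) := by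
  have h : ∀ t ∈ Ioi (0:ℝ), (1 - Real.cos t) * (s * Real.exp (-(s*t)))
      = s * Real.exp (-(s*t)) - s * (Real.exp (-(s*t)) * Real.cos t) := fun t _ => by ring
  rw [setIntegral_congr_fun measurableSet_Ioi h,
    integral_sub ((exp_rate_integrable hs).const_mul s) ((lap_cos_integrable hs).const_mul s),
    integral_const_mul, integral_const_mul, exp_rate_integral hs, lap_cos hs]
  field_simp
  ring

lemma uncurry_meas : AEMeasurable
    (Function.uncurry fun s t => ENNReal.ofReal ((1 - Real.cos t) * (s * Real.exp (-(s*t)))))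
    ((volume.restrict (Ioi (0:ℝ))).prod (volume.restrict (Ioi (0:ℝ)))) := by
  apply Measurable.aemeasurable
  apply Measurable.ennreal_ofReal
  have : Continuous fun p : ℝ × ℝ => (1 - Real.cos p.2) * (p.1 * Real.exp (-(p.1*p.2))) :=
    (continuous_const.sub (Real.continuous_cos.comp continuous_snd)).mul
      (continuous_fst.mul (Real.continuous_exp.comp (continuous_fst.mul continuous_snd).neg))
  exact this.measurable

lemma C_lintegral : ∫⁻ t in Ioi (0:ℝ), ENNReal.ofReal ((1 - Real.cos t)/t^2)
    = ENNReal.ofReal (π/2) := by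
  have stepA : ∀ t ∈ Ioi (0:ℝ), ENNReal.ofReal ((1 - Real.cos t)/t^2)
      = ∫⁻ s in Ioi (0:ℝ), ENNReal.ofReal ((1 - Real.cos t) * (s * Real.exp (-(s*t)))) := by
    intro t ht
    have ht' : (0:ℝ) < t := ht
    have hint : Integrable (fun s => (1 - Real.cos t) * (s * Real.exp (-(s*t))))
        (volume.restrict (Ioi (0:ℝ))) := by
      have h2 : IntegrableOn (fun s => (1 - Real.cos t) * (s * Real.exp (-(t*s)))) (Ioi (0:ℝ)) :=
        (exp_lin_integrableOn ht').const_mul (1 - Real.cos t)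
      exact IntegrableOn.congr_fun h2 (fun s _ => by rw [mul_comm s t]) measurableSet_Ioi
    have hval : ∫ s in Ioi (0:ℝ), (1 - Real.cos t) * (s * Real.exp (-(s*t)))
        = (1 - Real.cos t)/t^2 := by
      have h0 : ∀ s ∈ Ioi (0:ℝ), (1 - Real.cos t) * (s * Real.exp (-(s*t)))
          = (1 - Real.cos t) * (s * Real.exp (-(t*s))) := fun s _ => by rw [mul_comm s t]
      rw [setIntegral_congr_fun measurableSet_Ioi h0, integral_const_mul, exp_lin_integral ht']
      ring
    rw [← hval, ofReal_integral_eq_lintegral_ofReal hint]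
    filter_upwards [ae_restrict_mem measurableSet_Ioi] with s hs
    have : (0:ℝ) < s := hs
    have := Real.cos_le_one t
    have := Real.exp_pos (-(s*t))
    exact mul_nonneg (by linarith) (by positivity)
  have stepC : ∀ s ∈ Ioi (0:ℝ),
      ∫⁻ t in Ioi (0:ℝ), ENNReal.ofReal ((1 - Real.cos t) * (s * Real.exp (-(s*t))))
      = ENNReal.ofReal (1/(s^2+1)) := by
    intro s hs
    have hs' : (0:ℝ) < s := hs
    rw [← inner_t_integral hs', ofReal_integral_eq_lintegral_ofReal (inner_t_integrable hs')]
    filter_upwards [ae_restrict_mem measurableSet_Ioi] with t ht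
    have : (0:ℝ) < t := ht
    have := Real.cos_le_one t
    have := Real.exp_pos (-(s*t))
    exact mul_nonneg (by linarith) (by positivity)
  have stepD : ∫⁻ s in Ioi (0:ℝ), ENNReal.ofReal (1/(s^2+1)) = ENNReal.ofReal (π/2) := by
    have hint : IntegrableOn (fun s : ℝ => 1/(s^2+1)) (Ioi (0:ℝ)) :=
      integrable_inv_one_add_sq.integrableOn.congr_fun
        (fun s _ => by rw [one_div, add_comm]) measurableSet_Ioi
    rw [← ofReal_integral_eq_lintegral_ofReal hint (ae_of_all _ fun s => by positivity)]
    congr 1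
    have h0 : ∀ s ∈ Ioi (0:ℝ), (1:ℝ)/(s^2+1) = (1+s^2)⁻¹ := fun s _ => by
      rw [one_div, add_comm]
    rw [setIntegral_congr_fun measurableSet_Ioi h0, integral_Ioi_inv_one_add_sq]
    simp
  calc ∫⁻ t in Ioi (0:ℝ), ENNReal.ofReal ((1 - Real.cos t)/t^2)
      = ∫⁻ t in Ioi (0:ℝ), ∫⁻ s in Ioi (0:ℝ),
          ENNReal.ofReal ((1 - Real.cos t) * (s * Real.exp (-(s*t)))) :=
        setLIntegral_congr_fun measurableSet_Ioi stepA
    _ = ∫⁻ s in Ioi (0:ℝ), ∫⁻ t in Ioi (0:ℝ),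
          ENNReal.ofReal ((1 - Real.cos t) * (s * Real.exp (-(s*t)))) :=
        (lintegral_lintegral_swap uncurry_meas).symm
    _ = ∫⁻ s in Ioi (0:ℝ), ENNReal.ofReal (1/(s^2+1)) :=
        setLIntegral_congr_fun measurableSet_Ioi stepC
    _ = ENNReal.ofReal (π/2) := stepD

lemma C_real : ∫ t in Ioi (0:ℝ), (1 - Real.cos t)/t^2 = π/2 := by
  have hm : AEStronglyMeasurable (fun t : ℝ => (1 - Real.cos t)/t^2)
      (volume.restrict (Ioi (0:ℝ))) := by
    apply Measurable.aestronglyMeasurable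
    exact (measurable_const.sub Real.measurable_cos).div (measurable_id.pow_const 2)
  rw [integral_eq_lintegral_of_nonneg_ae
      (ae_of_all _ fun t => by simpa using one_sub_cos_div_sq_nonneg 1 t) hm,
    C_lintegral, ENNReal.toReal_ofReal (by positivity)]

lemma g_meas (a : ℝ) : Measurable (fun t : ℝ => (1 - Real.cos (a*t))/t^2) :=
  ((measurable_const.sub (Real.measurable_cos.comp (measurable_id.const_mul a))).div
    (measurable_id.pow_const 2))

lemma g_int (a : ℝ) : IntegrableOn (fun t => (1 - Real.cos (a*t))/t^2) (Ioi (0:ℝ)) := by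
  have h1 : IntegrableOn (fun t => (1 - Real.cos (a*t))/t^2) (Ioc (0:ℝ) 1) := by
    refine Integrable.mono' (g := fun _ => a^2/2)
      ((integrableOn_const_iff (C := a^2/2)).mpr (Or.inr (by rw [Real.volume_Ioc]; exact ENNReal.ofReal_lt_top)))
      ((g_meas a).aestronglyMeasurable) ?_
    · filter_upwards [ae_restrict_mem measurableSet_Ioc] with t ht
      rw [Real.norm_eq_abs, abs_of_nonneg (one_sub_cos_div_sq_nonneg a t)]
      rw [div_le_iff₀ (pow_pos ht.1 2)]
      have := Real.one_sub_sq_div_two_le_cos (x := a*t)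
      nlinarith [sq_nonneg (a*t), sq_nonneg a, sq_nonneg t, ht.1]
  have h2 : IntegrableOn (fun t => (1 - Real.cos (a*t))/t^2) (Ioi (1:ℝ)) := by
    refine Integrable.mono' ((integrableOn_Ioi_rpow_of_lt (by norm_num : (-2:ℝ) < -1)
      one_pos).const_mul 2) ((g_meas a).aestronglyMeasurable) ?_
    filter_upwards [ae_restrict_mem measurableSet_Ioi] with t ht
    have ht1 : (1:ℝ) < t := ht
    have ht0 : (0:ℝ) < t := by linarith
    rw [Real.norm_eq_abs, abs_of_nonneg (one_sub_cos_div_sq_nonneg a t)]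
    have hr : t ^ (-2:ℝ) = 1/t^2 := by
      rw [Real.rpow_neg ht0.le, one_div]
      congr 1
      rw [← Real.rpow_natCast t 2]
      norm_num
    rw [hr, div_le_iff₀ (pow_pos ht0 2)]
    have h22 : 2*(1/t^2)*t^2 = 2 := by field_simp
    rw [h22]
    nlinarith [Real.neg_one_le_cos (a*t)]
  have := h1.union h2
  rwa [Ioc_union_Ioi_eq_Ioi zero_le_one] at this

lemma lemA (a : ℝ) : ∫ t in Ioi (0:ℝ), (1 - Real.cos (a*t))/t^2 = π/2 * |a| := by
  rcases eq_or_ne a 0 with rfl | ha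
  · simp
  · have hb : (0:ℝ) < |a| := abs_pos.mpr ha
    have hcos : ∀ t : ℝ, Real.cos (a*t) = Real.cos (|a| * t) := by
      intro t
      rcases abs_choice a with h | h
      · rw [h]
      · rw [h, neg_mul, Real.cos_neg]
    have key : ∀ t ∈ Ioi (0:ℝ), (1 - Real.cos (a*t))/t^2
        = |a|^2 * ((1 - Real.cos (|a| * t))/(|a| * t)^2) := by
      intro t ht
      have ht' : (0:ℝ) < t := ht
      rw [hcos]
      rw [mul_pow, sq_abs]
      rw [mul_div_assoc']
      rw [div_eq_div_iff (by positivity : (t:ℝ)^2 ≠ 0) (by positivity : (a:ℝ)^2*t^2 ≠ 0)]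
      ring
    rw [setIntegral_congr_fun measurableSet_Ioi key, integral_const_mul]
    have hsub := MeasureTheory.integral_comp_mul_left_Ioi
      (fun u => (1 - Real.cos u)/u^2) 0 hb
    simp only [mul_zero] at hsub
    rw [hsub, C_real, smul_eq_mul, sq]
    rw [show |a| * |a| * (|a|⁻¹ * (π/2)) = (|a| * |a|⁻¹) * (|a| * (π/2)) by ring,
      mul_inv_cancel₀ hb.ne', one_mul]
    ring

lemma lemA' (a : ℝ) : ∫⁻ t in Ioi (0:ℝ), ENNReal.ofReal ((1 - Real.cos (a*t))/t^2)
    = ENNReal.ofReal (π/2 * |a|) := by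
  rw [← lemA a, ofReal_integral_eq_lintegral_ofReal (g_int a)
    (ae_of_all _ fun t => one_sub_cos_div_sq_nonneg a t)]

/-- **Zolotarev's identity**: for any real-valued random variable `X` with `E[|X|] < ∞`,
`E[|X|] = (2/π) ∫₀^∞ (1 - Re E[e^{itX}]) / t² dt`. -/
theorem zolotarev_identity {Ω : Type*} [MeasurableSpace Ω] (μ : Measure Ω)
    [IsProbabilityMeasure μ]
    (X : Ω → ℝ) (hX : Integrable X μ) :
    ∫ ω, |X ω| ∂μ =
      (2 / Real.pi) * ∫ t in Set.Ioi (0 : ℝ),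
        (1 - (∫ ω, Complex.exp (Complex.I * (t : ℂ) * (X ω : ℂ)) ∂μ).re) / t ^ 2 := by
  obtain ⟨φ, hφm, hφae⟩ : ∃ φ : Ω → ℝ, StronglyMeasurable φ ∧ X =ᵐ[μ] φ :=
    ⟨hX.1.mk X, hX.1.stronglyMeasurable_mk, hX.1.ae_eq_mk⟩
  have hφint : Integrable φ μ := hX.congr hφae
  have hIrw : ∀ (t x : ℝ), Complex.I * (t:ℂ) * (x:ℂ) = ((t*x : ℝ) : ℂ) * Complex.I := by
    intro t x; push_cast; ring
  have hexpcont : ∀ t : ℝ, Continuous fun x : ℝ => Complex.exp (Complex.I * (t:ℂ) * (x:ℂ)) := by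
    intro t
    exact Complex.continuous_exp.comp ((continuous_const.mul Complex.continuous_ofReal))
  have hexp_meas : ∀ t : ℝ, AEStronglyMeasurable
      (fun ω => Complex.exp (Complex.I * (t:ℂ) * (X ω : ℂ))) μ := by
    intro t
    refine (((hexpcont t).comp_stronglyMeasurable hφm).aestronglyMeasurable).congr ?_
    filter_upwards [hφae] with ω h
    simp [Function.comp, h]
  have hexp_int : ∀ t : ℝ, Integrable
      (fun ω => Complex.exp (Complex.I * (t:ℂ) * (X ω : ℂ))) μ := by
    intro t
    refine Integrable.mono' (integrable_const (1:ℝ)) (hexp_meas t) (ae_of_all _ fun ω => ?_)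
    rw [hIrw]
    rw [Complex.norm_exp_ofReal_mul_I]
  have hcos_meas : ∀ t : ℝ, AEStronglyMeasurable (fun ω => Real.cos (t * X ω)) μ := by
    intro t
    have hc : Continuous fun x : ℝ => Real.cos (t * x) :=
      Real.continuous_cos.comp (continuous_const.mul continuous_id)
    refine ((hc.comp_stronglyMeasurable hφm).aestronglyMeasurable).congr ?_
    filter_upwards [hφae] with ω h
    simp [Function.comp, h]
  have hcos_int : ∀ t : ℝ, Integrable (fun ω => Real.cos (t * X ω)) μ := by
    intro t
    refine Integrable.mono' (integrable_const (1:ℝ)) (hcos_meas t) (ae_of_all _ fun ω => ?_)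
    rw [Real.norm_eq_abs]
    exact Real.abs_cos_le_one _
  have hstep1 : ∀ t ∈ Ioi (0:ℝ),
      (1 - (∫ ω, Complex.exp (Complex.I * (t:ℂ) * (X ω : ℂ)) ∂μ).re) / t ^ 2
      = ∫ ω, (1 - Real.cos (t * φ ω))/t^2 ∂μ := by
    intro t _
    have hre : (∫ ω, Complex.exp (Complex.I * (t:ℂ) * (X ω : ℂ)) ∂μ).re
        = ∫ ω, Real.cos (t * X ω) ∂μ := by
      have h := integral_re (hexp_int t)
      simp only [RCLike.re_to_complex] at h
      rw [← h]
      refine integral_congr_ae (ae_of_all _ fun ω => ?_)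
      show (Complex.exp (Complex.I * (t:ℂ) * (X ω : ℂ))).re = Real.cos (t * X ω)
      rw [hIrw]
      exact Complex.exp_ofReal_mul_I_re _
    rw [hre]
    have h1 : (1:ℝ) = ∫ _ω, (1:ℝ) ∂μ := by simp
    rw [show (1:ℝ) - ∫ ω, Real.cos (t * X ω) ∂μ
        = ∫ ω, (1 - Real.cos (t * X ω)) ∂μ by
      rw [integral_sub (integrable_const 1) (hcos_int t)]; simp]
    rw [← integral_div]
    refine integral_congr_ae ?_
    filter_upwards [hφae] with ω h
    rw [h]
  rw [setIntegral_congr_fun measurableSet_Ioi hstep1]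
  -- Tonelli
  have hFnn : ∀ (t : ℝ) (ω : Ω), 0 ≤ (1 - Real.cos (t * φ ω))/t^2 := by
    intro t ω
    rw [mul_comm]
    exact one_sub_cos_div_sq_nonneg (φ ω) t
  have hFmeas : StronglyMeasurable (fun p : ℝ × Ω => (1 - Real.cos (p.1 * φ p.2))/p.1^2) := by
    apply Measurable.stronglyMeasurable
    exact (measurable_const.sub
      ((measurable_fst.mul (hφm.measurable.comp measurable_snd)).cos)).div
      (measurable_fst.pow_const 2)
  have hFint : ∀ t : ℝ, Integrable (fun ω => (1 - Real.cos (t * φ ω))/t^2) μ := by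
    intro t
    rcases eq_or_ne t 0 with rfl | ht
    · simp only [zero_mul, Real.cos_zero, sub_self, zero_div]
      exact integrable_const 0
    · refine Integrable.mono' (integrable_const (2/t^2)) ?_ (ae_of_all _ fun ω => ?_)
      · exact ((measurable_const.sub ((hφm.measurable.const_mul t).cos)).div_const
          (t^2)).aestronglyMeasurable
      · rw [Real.norm_eq_abs, abs_of_nonneg (hFnn t ω)]
        gcongr
        nlinarith [Real.neg_one_le_cos (t * φ ω)]
  have hswap :
      ∫ t in Ioi (0:ℝ), ∫ ω, (1 - Real.cos (t * φ ω))/t^2 ∂μ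
      = π/2 * ∫ ω, |φ ω| ∂μ := by
    have hKm : AEStronglyMeasurable (fun t => ∫ ω, (1 - Real.cos (t * φ ω))/t^2 ∂μ)
        (volume.restrict (Ioi (0:ℝ))) :=
      (hFmeas.integral_prod_right').aestronglyMeasurable
    have h1 : ∫ t in Ioi (0:ℝ), ∫ ω, (1 - Real.cos (t * φ ω))/t^2 ∂μ
        = (∫⁻ t in Ioi (0:ℝ), ∫⁻ ω, ENNReal.ofReal ((1 - Real.cos (t * φ ω))/t^2) ∂μ).toReal := by
      rw [integral_eq_lintegral_of_nonneg_ae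
        (ae_of_all _ fun t => integral_nonneg (fun ω => hFnn t ω)) hKm]
      congr 1
      refine lintegral_congr fun t => ?_
      exact ofReal_integral_eq_lintegral_ofReal (hFint t) (ae_of_all _ fun ω => hFnn t ω)
    have hum : AEMeasurable
        (Function.uncurry fun t ω => ENNReal.ofReal ((1 - Real.cos (t * φ ω))/t^2))
        ((volume.restrict (Ioi (0:ℝ))).prod μ) :=
      (hFmeas.measurable.ennreal_ofReal).aemeasurable
    have h2 := lintegral_lintegral_swap hum
    have h3 : ∀ ω : Ω, ∫⁻ t in Ioi (0:ℝ), ENNReal.ofReal ((1 - Real.cos (t * φ ω))/t^2)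
        = ENNReal.ofReal (π/2 * |φ ω|) := by
      intro ω
      rw [← lemA' (φ ω)]
      refine lintegral_congr fun t => ?_
      rw [mul_comm]
    have h4 : ∫⁻ ω, ENNReal.ofReal (π/2 * |φ ω|) ∂μ = ENNReal.ofReal (∫ ω, π/2 * |φ ω| ∂μ) :=
      (ofReal_integral_eq_lintegral_ofReal ((hφint.abs).const_mul (π/2))
        (ae_of_all _ fun ω => by positivity)).symm
    rw [h1, h2]
    simp_rw [h3]
    rw [h4, ENNReal.toReal_ofReal (integral_nonneg fun ω => by positivity), integral_const_mul]
  rw [hswap]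
  have hXφ : ∫ ω, |X ω| ∂μ = ∫ ω, |φ ω| ∂μ :=
    integral_congr_ae (hφae.mono fun ω h => by simp only []; rw [h])
  rw [hXφ]
  have hπ : Real.pi ≠ 0 := Real.pi_ne_zero
  field_simp
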